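/- Let E be a real inner product space, f : E → ℝ a differentiable function with f(x) ≥ 0 for all x, whose gradient g : E → E (so that g(x) is the gradient of f at x for every x) is Lipschitz continuous with constant θ > 0. Fix ε > 0 and a step size η with 0 < η ≤ 1/θ. Let w : ℕ → E be iterates satisfying w_{k+1} = w_k − η·d_k for some directions d_k ∈ E, and let K be a natural number such that ‖d_k − g(w_k)‖ ≤ ‖g(w_k)‖ − ε for every k < K. Then (K : ℝ) ≤ 2·f(w_0)/(η·ε²). (This is the deterministic form of Theorem 3: if at each step the gradient computed on the sampled graph approximates the manifold gradient to within ‖g(w_k)‖ − ε, then after at most O(1/ε²) iterations the procedure must stop, i.e., reach a point where the gradient condition fails, which happens only within an ε-neighborhood of a stationary point of the manifold risk.) -/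

import Mathlib

open intervalIntegral

local notation "⟪" x ", " y "⟫" => @inner ℝ _ _ x y

/-- Descent lemma for a function with `θ`-Lipschitz gradient. -/
lemma descent_lemma {E : Type*} [NormedAddCommGroup E] [InnerProductSpace ℝ E] [CompleteSpace E]
    (f : E → ℝ) (g : E → E) (θ : ℝ) (hθ : 0 ≤ θ)
    (hgrad : ∀ x, HasGradientAt f (g x) x)
    (hLip : LipschitzWith θ.toNNReal g) (x v : E) :
    f (x + v) ≤ f x + ⟪g x, v⟫ + θ / 2 * ‖v‖ ^ 2 := by
  set c : ℝ → E := fun t => x + t • v with hc_def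
  have hc : ∀ t : ℝ, HasDerivAt c v t := by
    intro t
    simpa [hc_def] using ((hasDerivAt_id t).smul_const v).const_add x
  have hccont : Continuous c := by
    apply continuous_const.add (continuous_id.smul continuous_const)
  have hφ : ∀ t : ℝ, HasDerivAt (fun t => f (c t)) ⟪g (c t), v⟫ t := by
    intro t
    exact (hgrad (c t)).hasFDerivAt.comp_hasDerivAt t (hc t)
  have hcont : Continuous fun t => ⟪g (c t), v⟫ :=
    (hLip.continuous.comp hccont).inner continuous_const
  have key : ∫ t in (0:ℝ)..1, ⟪g (c t), v⟫ = f (c 1) - f (c 0) :=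
    intervalIntegral.integral_eq_sub_of_hasDerivAt (fun t _ => hφ t)
      (hcont.intervalIntegrable 0 1)
  have hc0 : c 0 = x := by simp [hc_def]
  have hc1 : c 1 = x + v := by simp [hc_def]
  have hb : ∀ t ∈ Set.Icc (0:ℝ) 1, ⟪g (c t), v⟫ ≤ ⟪g x, v⟫ + θ * ‖v‖ ^ 2 * t := by
    intro t ht
    have h1 : ⟪g (c t) - g x, v⟫ ≤ ‖g (c t) - g x‖ * ‖v‖ := real_inner_le_norm _ _
    have h2 : ‖g (c t) - g x‖ ≤ θ * (t * ‖v‖) := by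
      have h := hLip.dist_le_mul (c t) x
      simp only [dist_eq_norm] at h
      have : c t - x = t • v := by simp [hc_def]
      rw [this] at h
      rw [norm_smul, Real.norm_eq_abs, abs_of_nonneg ht.1] at h
      simpa [Real.coe_toNNReal θ hθ, mul_assoc] using h
    have h3 : ⟪g (c t), v⟫ = ⟪g x, v⟫ + ⟪g (c t) - g x, v⟫ := by
      rw [inner_sub_left]; ring
    have hv : (0:ℝ) ≤ ‖v‖ := norm_nonneg _
    nlinarith [h1, h2, mul_le_mul_of_nonneg_right h2 hv]
  have hint : ∫ t in (0:ℝ)..1, ⟪g (c t), v⟫ ≤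
      ∫ t in (0:ℝ)..1, (⟪g x, v⟫ + θ * ‖v‖ ^ 2 * t) := by
    apply intervalIntegral.integral_mono_on zero_le_one
      (hcont.intervalIntegrable 0 1)
      ((by continuity : Continuous fun t : ℝ => ⟪g x, v⟫ + θ * ‖v‖ ^ 2 * t).intervalIntegrable 0 1)
    exact hb
  have hrhs : ∫ t in (0:ℝ)..1, (⟪g x, v⟫ + θ * ‖v‖ ^ 2 * t) =
      ⟪g x, v⟫ + θ / 2 * ‖v‖ ^ 2 := by
    rw [intervalIntegral.integral_add intervalIntegrable_const
      ((by continuity : Continuous fun t : ℝ => θ * ‖v‖ ^ 2 * t).intervalIntegrable 0 1),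
      intervalIntegral.integral_const_mul, integral_id]
    simp
    ring
  rw [hc0, hc1] at key
  linarith [key ▸ (hrhs ▸ hint)]

/-- Deterministic form of Theorem 3: if at each of K steps the graph-computed
direction d_k approximates the manifold gradient g(w_k) to within
‖g(w_k)‖ − ε, then K ≤ 2 f(w 0)/(η ε²), i.e., the procedure stops after
O(1/ε²) iterations. -/
theorem stmt_13 {E : Type*} [NormedAddCommGroup E] [InnerProductSpace ℝ E]
    [CompleteSpace E] (f : E → ℝ) (hf : ∀ x, 0 ≤ f x)
    (g : E → E) (θ : ℝ) (hθ : 0 < θ)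
    (hgrad : ∀ x, HasGradientAt f (g x) x)
    (hLip : LipschitzWith θ.toNNReal g)
    (ε : ℝ) (hε : 0 < ε) (η : ℝ) (hη : 0 < η) (hηθ : η ≤ 1 / θ)
    (w : ℕ → E) (d : ℕ → E)
    (hupd : ∀ k, w (k + 1) = w k - η • d k)
    (K : ℕ) (happrox : ∀ k < K, ‖d k - g (w k)‖ ≤ ‖g (w k)‖ - ε) :
    (K : ℝ) ≤ 2 * f (w 0) / (η * ε ^ 2) := by
  have hθη : θ * η ≤ 1 := by
    rw [le_div_iff₀ hθ] at hηθ; linarith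
  have step : ∀ k, k < K → f (w (k + 1)) ≤ f (w k) - η * ε ^ 2 / 2 := by
    intro k hk
    have hdes := descent_lemma f g θ hθ.le hgrad hLip (w k) (-(η • d k))
    have hupd' : w (k + 1) = w k + -(η • d k) := by rw [hupd k, sub_eq_add_neg]
    rw [← hupd'] at hdes
    set G := g (w k) with hG
    set D := d k with hD
    have hinner : ⟪G, -(η • D)⟫ = -(η * ⟪G, D⟫) := by
      rw [inner_neg_right, real_inner_smul_right]
    have hnorm : ‖-(η • D)‖ ^ 2 = η ^ 2 * ‖D‖ ^ 2 := by
      rw [norm_neg, norm_smul, Real.norm_eq_abs, abs_of_pos hη, mul_pow]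
    rw [hinner, hnorm] at hdes
    -- quadratic bound: θ/2 * η² ‖D‖² ≤ η/2 ‖D‖²
    have hq : θ / 2 * (η ^ 2 * ‖D‖ ^ 2) ≤ η / 2 * ‖D‖ ^ 2 := by
      nlinarith [sq_nonneg ‖D‖, hη.le]
    -- gap bound : ε² ≤ 2⟪G,D⟫ - ‖D‖²
    have happ : ‖D - G‖ ≤ ‖G‖ - ε := happrox k hk
    have hεG : ε ≤ ‖G‖ := by
      have := norm_nonneg (D - G); linarith
    have hid : ‖G - D‖ ^ 2 = ‖G‖ ^ 2 - 2 * ⟪G, D⟫ + ‖D‖ ^ 2 := by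
      rw [norm_sub_sq_real]
    have hrev : ‖G - D‖ = ‖D - G‖ := norm_sub_rev _ _
    have hsq : ‖G - D‖ ^ 2 ≤ (‖G‖ - ε) ^ 2 := by
      rw [hrev]
      exact pow_le_pow_left₀ (norm_nonneg _) happ 2
    have hgap : ε ^ 2 ≤ 2 * ⟪G, D⟫ - ‖D‖ ^ 2 := by nlinarith
    nlinarith [hdes]
  have main : ∀ k, k ≤ K → f (w k) ≤ f (w 0) - k * (η * ε ^ 2 / 2) := by
    intro k hk
    induction k with
    | zero => simp
    | succ n ih =>
      have hn : n < K := hk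
      have := step n hn
      have hih := ih (le_of_lt hn)
      push_cast
      linarith
  have hK := main K le_rfl
  have h0 := hf (w K)
  have hd : 0 < η * ε ^ 2 := mul_pos hη (pow_pos hε 2)
  rw [le_div_iff₀ hd]
  nlinarith
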